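/- Let a, γ > 0 and let x: [0,∞) → ℝ satisfy x' ≤ x(a - γx) with x(0) = x̄ > 0. Then for all t ≥ 0, x(t) ≤ x̄·exp(a t) / (1 + x̄·γ·a⁻¹·(exp(a t) − 1)). -/

import Mathlib

open Set Real

private lemma logistic_hasDerivAt (a γ xbar : ℝ) (ha : 0 < a) (s : ℝ)
    (hD : (1 + xbar * γ * a⁻¹ * (Real.exp (a * s) - 1)) ≠ 0) :
    HasDerivAt (fun s => xbar * Real.exp (a * s) /
        (1 + xbar * γ * a⁻¹ * (Real.exp (a * s) - 1)))
      ((xbar * Real.exp (a * s) / (1 + xbar * γ * a⁻¹ * (Real.exp (a * s) - 1))) *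
        (a - γ * (xbar * Real.exp (a * s) /
          (1 + xbar * γ * a⁻¹ * (Real.exp (a * s) - 1))))) s := by
  have h1 : HasDerivAt (fun s : ℝ => a * s) a s := by
    simpa using (hasDerivAt_id s).const_mul a
  have hN : HasDerivAt (fun s : ℝ => xbar * Real.exp (a * s))
      (xbar * (Real.exp (a * s) * a)) s := h1.exp.const_mul xbar
  have hDd : HasDerivAt (fun s : ℝ => 1 + xbar * γ * a⁻¹ * (Real.exp (a * s) - 1))
      (xbar * γ * a⁻¹ * (Real.exp (a * s) * a)) s :=
    (((h1.exp).sub_const 1).const_mul (xbar * γ * a⁻¹)).const_add 1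
  have := hN.div hDd hD
  convert this using 1
  · rfl
  · rfl
  · rfl
  have hDeq : 1 + xbar * γ * a⁻¹ * (Real.exp (a * s) - 1)
      = (xbar * Real.exp (a * s) * γ - xbar * γ + a) / a := by
    field_simp; ring
  have hD2 : xbar * Real.exp (a * s) * γ - xbar * γ + a ≠ 0 := by
    intro h
    exact hD (by rw [hDeq, h, zero_div])
  rw [hDeq]
  field_simp [show xbar * γ * (Real.exp (a * s) - 1) + a ≠ 0 by convert hD2 using 1; ring]

/-- Logistic comparison estimate: if `x' ≤ x (a - γ x)`, `x(0) = x̄ > 0`, then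
`x t ≤ x̄ exp(a t) / (1 + x̄ γ a⁻¹ (exp(a t) - 1))` for `t ≥ 0`. -/
theorem stmt0 (a γ : ℝ) (ha : 0 < a) (hγ : 0 < γ)
    (x x' : ℝ → ℝ) (xbar : ℝ) (hxbar : 0 < xbar) (hx0 : x 0 = xbar)
    (hderiv : ∀ t, 0 ≤ t → HasDerivAt x (x' t) t)
    (hineq : ∀ t, 0 ≤ t → x' t ≤ x t * (a - γ * x t)) :
    ∀ t, 0 ≤ t →
      x t ≤ xbar * Real.exp (a * t) /
        (1 + xbar * γ * a⁻¹ * (Real.exp (a * t) - 1)) := by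
  intro t ht
  set φ : ℝ → ℝ := fun s => xbar * Real.exp (a * s) /
      (1 + xbar * γ * a⁻¹ * (Real.exp (a * s) - 1)) with hφ
  have hDpos : ∀ s : ℝ, 0 ≤ s → 0 < 1 + xbar * γ * a⁻¹ * (Real.exp (a * s) - 1) := by
    intro s hs
    have h1 : (1 : ℝ) ≤ Real.exp (a * s) := by
      simpa using Real.exp_le_exp.2 (mul_nonneg ha.le hs)
    have h2 : 0 ≤ xbar * γ * a⁻¹ := by positivity
    nlinarith
  have hφpos : ∀ s : ℝ, 0 ≤ s → 0 < φ s := by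
    intro s hs
    exact div_pos (by positivity) (hDpos s hs)
  have hφderiv : ∀ s : ℝ, 0 ≤ s → HasDerivAt φ (φ s * (a - γ * φ s)) s := by
    intro s hs
    exact logistic_hasDerivAt a γ xbar ha s (hDpos s hs).ne'
  have hφ0 : φ 0 = xbar := by simp [hφ]
  -- It suffices to prove the bound with any positive `ε` added
  refine le_of_forall_pos_le_add ?_
  intro δ hδ
  have hEpos : 0 < Real.exp (a * t) := Real.exp_pos _
  set ε : ℝ := δ / Real.exp (a * t) with hε
  have hεpos : 0 < ε := div_pos hδ hEpos
  set B : ℝ → ℝ := fun s => φ s + ε * Real.exp (a * s) with hB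
  set B' : ℝ → ℝ := fun s => φ s * (a - γ * φ s) + ε * (Real.exp (a * s) * a) with hB'
  have hBd : ∀ s : ℝ, 0 ≤ s → HasDerivAt B (B' s) s := by
    intro s hs
    have h1 : HasDerivAt (fun s : ℝ => a * s) a s := by
      simpa using (hasDerivAt_id s).const_mul a
    exact (hφderiv s hs).add (h1.exp.const_mul ε)
  have key : x t ≤ B t := by
    refine image_le_of_deriv_right_lt_deriv_boundary'
      (f := x) (f' := x') (a := 0) (b := t) (B := B) (B' := B')
      (fun s hs => (hderiv s hs.1).continuousAt.continuousWithinAt)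
      (fun s hs => (hderiv s hs.1).hasDerivWithinAt)
      ?_ (fun s hs => (hBd s hs.1).continuousAt.continuousWithinAt)
      (fun s hs => (hBd s hs.1).hasDerivWithinAt) ?_ ⟨ht, le_rfl⟩
    · rw [hx0]
      simp only [hB, hφ0]
      have h2 : 0 < ε * Real.exp (a * 0) := by positivity
      linarith
    · intro s hs hxB
      have hs0 : 0 ≤ s := hs.1
      have hp : 0 < φ s := hφpos s hs0
      have hd : 0 < ε * Real.exp (a * s) := by positivity
      have h1 := hineq s hs0
      rw [hxB] at h1
      simp only [hB, hB'] at *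
      nlinarith [h1, mul_pos hγ (mul_pos hp hd), mul_pos hγ (mul_pos hd hd)]
  have hBt : B t = φ t + δ := by
    simp only [hB, hε]
    field_simp
  rw [hBt] at key
  exact key
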